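/- Let H be a real Hilbert space, F : H → H a contraction with factor ρ ∈ (0,1) (i.e., ‖F(v) − F(w)‖ ≤ ρ‖v − w‖ for all v, w ∈ H) with fixed point u*, and S : H → H non-expansive (i.e., ‖S(v) − S(w)‖ ≤ ‖v − w‖ for all v, w). Then there exists a unique u^S ∈ H with u^S = S(F(u^S)), this point satisfies (1 + ρ)^{−1} ‖S(u*) − u*‖ ≤ ‖u^S − u*‖ ≤ (1 − ρ)^{−1} ‖S(u*) − u*‖, and for any u_0 ∈ H the iterates u_{k+1} := S(F(u_k)) satisfy ‖u_k − u^S‖ ≤ ρ^k ‖u_0 − u^S‖ for all k ≥ 0. -/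

import Mathlib

/-- **Thresholded fixed-point iteration (Lemma on `u^S`).** If `F` is a `ρ`-contraction with
fixed point `u*` and `S` is non-expansive, then `S ∘ F` has a unique fixed point `u^S`,
satisfying `(1+ρ)⁻¹‖S u* - u*‖ ≤ ‖u^S - u*‖ ≤ (1-ρ)⁻¹‖S u* - u*‖`, and the iterates
`u_{k+1} = S(F(u_k))` converge to `u^S` at rate `ρ`. -/
theorem softThresholded_fixed_point
    {H : Type*} [NormedAddCommGroup H] [InnerProductSpace ℝ H] [CompleteSpace H]
    (F : H → H) (ρ : ℝ) (hρ0 : 0 < ρ) (hρ1 : ρ < 1)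
    (hF : ∀ v w : H, ‖F v - F w‖ ≤ ρ * ‖v - w‖)
    (ustar : H) (hfix : F ustar = ustar)
    (S : H → H) (hS : ∀ v w : H, ‖S v - S w‖ ≤ ‖v - w‖) :
    ∃ uS : H,
      uS = S (F uS)
      ∧ (∀ w : H, w = S (F w) → w = uS)
      ∧ (1 + ρ)⁻¹ * ‖S ustar - ustar‖ ≤ ‖uS - ustar‖
      ∧ ‖uS - ustar‖ ≤ (1 - ρ)⁻¹ * ‖S ustar - ustar‖
      ∧ ∀ (u0 : H) (k : ℕ), ‖(fun v => S (F v))^[k] u0 - uS‖ ≤ ρ ^ k * ‖u0 - uS‖ := by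
  set T : H → H := fun v => S (F v) with hT
  have hTlip : ∀ v w : H, ‖T v - T w‖ ≤ ρ * ‖v - w‖ := fun v w =>
    (hS (F v) (F w)).trans (hF v w)
  have hρ0' : (0:ℝ) ≤ ρ := le_of_lt hρ0
  have hlip : LipschitzWith ⟨ρ, hρ0'⟩ T := by
    apply LipschitzWith.of_dist_le_mul
    intro v w
    rw [dist_eq_norm, dist_eq_norm]; exact hTlip v w
  have hcontr : ContractingWith ⟨ρ, hρ0'⟩ T := ⟨by exact_mod_cast hρ1, hlip⟩
  haveI : Nonempty H := ⟨0⟩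
  set uS := hcontr.fixedPoint T with huSdef
  have huS : T uS = uS := hcontr.fixedPoint_isFixedPt
  have hTstar : T ustar = S ustar := by simp [hT, hfix]
  refine ⟨uS, huS.symm, ?_, ?_, ?_, ?_⟩
  · intro w hw
    exact hcontr.fixedPoint_unique hw.symm
  · -- lower bound
    have e : S ustar - ustar = (S ustar - uS) + (uS - ustar) := by abel
    have h1 : ‖S ustar - uS‖ ≤ ρ * ‖uS - ustar‖ := by
      calc ‖S ustar - uS‖ = ‖T ustar - T uS‖ := by rw [hTstar, huS]
        _ ≤ ρ * ‖ustar - uS‖ := hTlip _ _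
        _ = ρ * ‖uS - ustar‖ := by rw [norm_sub_rev]
    have h2 : ‖S ustar - ustar‖ ≤ (1 + ρ) * ‖uS - ustar‖ := by
      calc ‖S ustar - ustar‖ = ‖(S ustar - uS) + (uS - ustar)‖ := by rw [← e]
        _ ≤ ‖S ustar - uS‖ + ‖uS - ustar‖ := norm_add_le _ _
        _ ≤ ρ * ‖uS - ustar‖ + ‖uS - ustar‖ := by linarith
        _ = (1 + ρ) * ‖uS - ustar‖ := by ring
    rw [inv_mul_eq_div, div_le_iff₀ (by linarith)]
    linarith
  · -- upper bound
    have e : uS - ustar = (uS - S ustar) + (S ustar - ustar) := by abel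
    have h1 : ‖uS - S ustar‖ ≤ ρ * ‖uS - ustar‖ := by
      calc ‖uS - S ustar‖ = ‖T uS - T ustar‖ := by rw [hTstar, huS]
        _ ≤ ρ * ‖uS - ustar‖ := hTlip _ _
    have h2 : ‖uS - ustar‖ ≤ ρ * ‖uS - ustar‖ + ‖S ustar - ustar‖ := by
      calc ‖uS - ustar‖ = ‖(uS - S ustar) + (S ustar - ustar)‖ := by rw [← e]
        _ ≤ ‖uS - S ustar‖ + ‖S ustar - ustar‖ := norm_add_le _ _
        _ ≤ ρ * ‖uS - ustar‖ + ‖S ustar - ustar‖ := by linarith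
    rw [inv_mul_eq_div, le_div_iff₀ (by linarith)]
    linarith
  · intro u0 k
    induction k with
    | zero => simp
    | succ n ih =>
      calc ‖T^[n+1] u0 - uS‖ = ‖T (T^[n] u0) - T uS‖ := by
            rw [Function.iterate_succ_apply', huS]
        _ ≤ ρ * ‖T^[n] u0 - uS‖ := hTlip _ _
        _ ≤ ρ * (ρ ^ n * ‖u0 - uS‖) := mul_le_mul_of_nonneg_left ih hρ0'
        _ = ρ ^ (n+1) * ‖u0 - uS‖ := by ring
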